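/- Let {X_s}_{s∈ℕ₀} be a decreasing sequence of Banach spaces with increasing norms and dense intersection X_F ≠ {0}. Let {g_i} ⊂ X₀* and suppose there exists {f_i} ⊂ X_F \ {0} such that for every s and every f ∈ X_s, f = ∑_{i=1}^∞ g_i(f) f_i with convergence in X_s. Define Θ_s := {c : ∑_{i≤n} c_i f_i converges in X_s} with ‖c‖_s := sup_n ‖∑_{i=1}^n c_i f_i‖_s. Then each Θ_s is a CB-space, Θ_{s+1} ⊆ Θ_s with ‖·‖_s ≤ ‖·‖_{s+1}, {g_i|_{X_s}} is a Banach frame for X_s with respect to Θ_s for each s, and {g_i|_{X_F}} is an F-frame for X_F with respect to Θ_F := ⋂_s Θ_s. -/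

import Mathlib

open Filter Topology

noncomputable section

def IsNormOn {X : Type*} [AddCommGroup X] [Module ℝ X] (S : Set X) (N : X → ℝ) : Prop :=
  (0 : X) ∈ S ∧ (∀ c ∈ S, ∀ d ∈ S, c + d ∈ S) ∧ (∀ (a : ℝ), ∀ c ∈ S, a • c ∈ S) ∧
  (∀ c ∈ S, 0 ≤ N c) ∧ (∀ c ∈ S, N c = 0 → c = 0) ∧
  (∀ c ∈ S, ∀ d ∈ S, N (c + d) ≤ N c + N d) ∧
  (∀ (a : ℝ), ∀ c ∈ S, N (a • c) = |a| * N c)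

def IsBanachOn {X : Type*} [AddCommGroup X] [Module ℝ X] (S : Set X) (N : X → ℝ) : Prop :=
  IsNormOn S N ∧ ∀ u : ℕ → X, (∀ n, u n ∈ S) →
    (∀ ε > 0, ∃ M, ∀ m ≥ M, ∀ n ≥ M, N (u m - u n) < ε) →
    ∃ x ∈ S, Tendsto (fun n => N (u n - x)) atTop (nhds 0)

def IsBKOn (S : Set (ℕ → ℝ)) (N : (ℕ → ℝ) → ℝ) : Prop :=
  IsBanachOn S N ∧ ∀ i, ∃ K : ℝ, ∀ c ∈ S, |c i| ≤ K * N c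

def IsScale {X : Type*} [AddCommGroup X] [Module ℝ X] (S : ℕ → Set X) (N : ℕ → X → ℝ) : Prop :=
  (∀ s, IsBanachOn (S s) (N s)) ∧ (∀ s, S (s+1) ⊆ S s) ∧
  (∀ s, ∀ f ∈ S (s+1), N s f ≤ N (s+1) f) ∧
  (∀ s, ∀ f ∈ S s, ∀ ε > 0, ∃ h ∈ ⋂ t, S t, N s (f - h) < ε)

namespace ProofAux

variable {X : Type*} [AddCommGroup X] [Module ℝ X] {S : Set X} {N : X → ℝ}

theorem norm_zero' (h : IsNormOn S N) : N (0 : X) = 0 := by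
  have := h.2.2.2.2.2.2 0 0 h.1
  simpa using this

theorem neg_mem (h : IsNormOn S N) {x : X} (hx : x ∈ S) : -x ∈ S := by
  have := h.2.2.1 (-1) x hx; simpa using this

theorem sub_mem (h : IsNormOn S N) {x y : X} (hx : x ∈ S) (hy : y ∈ S) : x - y ∈ S := by
  have := h.2.1 x hx (-y) (neg_mem h hy); simpa [sub_eq_add_neg] using this

theorem norm_neg' (h : IsNormOn S N) {x : X} (hx : x ∈ S) : N (-x) = N x := by
  have := h.2.2.2.2.2.2 (-1) x hx; simpa using this

theorem norm_sub_comm' (h : IsNormOn S N) {x y : X} (hx : x ∈ S) (hy : y ∈ S) :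
    N (x - y) = N (y - x) := by
  rw [← norm_neg' h (sub_mem h hx hy), neg_sub]

theorem norm_sub_le' (h : IsNormOn S N) {x y : X} (hx : x ∈ S) (hy : y ∈ S) :
    N (x - y) ≤ N x + N y := by
  have := h.2.2.2.2.2.1 x hx (-y) (neg_mem h hy)
  simpa [sub_eq_add_neg, norm_neg' h hy] using this

theorem norm_triangle3 (h : IsNormOn S N) {x y z : X} (hx : x ∈ S) (hy : y ∈ S) (hz : z ∈ S) :
    N (x - z) ≤ N (x - y) + N (y - z) := by
  have := h.2.2.2.2.2.1 (x - y) (sub_mem h hx hy) (y - z) (sub_mem h hy hz)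
  simpa using this

theorem sum_mem' (h : IsNormOn S N) {ι : Type*} (t : Finset ι) (x : ι → X)
    (hx : ∀ i ∈ t, x i ∈ S) : (∑ i ∈ t, x i) ∈ S := by
  classical
  induction t using Finset.induction with
  | empty => simpa using h.1
  | insert a u hni ih =>
    rw [Finset.sum_insert hni]
    exact h.2.1 _ (hx a (Finset.mem_insert_self a u)) _
      (ih fun i hi => hx i (Finset.mem_insert_of_mem hi))

theorem norm_sum_le' (h : IsNormOn S N) {ι : Type*} (t : Finset ι) (x : ι → X)
    (hx : ∀ i ∈ t, x i ∈ S) : N (∑ i ∈ t, x i) ≤ ∑ i ∈ t, N (x i) := by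
  classical
  induction t using Finset.induction with
  | empty => simp [norm_zero' h]
  | insert a u hni ih =>
    rw [Finset.sum_insert hni, Finset.sum_insert hni]
    calc N (x a + ∑ i ∈ u, x i) ≤ N (x a) + N (∑ i ∈ u, x i) :=
          h.2.2.2.2.2.1 _ (hx a (Finset.mem_insert_self a u)) _
            (sum_mem' h u x fun i hi => hx i (Finset.mem_insert_of_mem hi))
      _ ≤ N (x a) + ∑ i ∈ u, N (x i) := by
          linarith [ih fun i hi => hx i (Finset.mem_insert_of_mem hi)]

def toSub (h : IsNormOn S N) : Submodule ℝ X where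
  carrier := S
  add_mem' := fun ha hb => h.2.1 _ ha _ hb
  zero_mem' := h.1
  smul_mem' := fun a x hx => h.2.2.1 a x hx

theorem ubp {S : Set X} {N : X → ℝ}
    (hB : IsBanachOn S N) (g : ℕ → X →ₗ[ℝ] ℝ)
    (hg : ∀ i, ∃ C, 0 ≤ C ∧ ∀ f ∈ S, |g i f| ≤ C * N f)
    (fv : ℕ → X) (hfv : ∀ i, fv i ∈ S)
    (hpt : ∀ f ∈ S, ∃ C, ∀ n, N (∑ i ∈ Finset.range n, g i f • fv i) ≤ C) :
    ∃ B, ∀ f ∈ S, ∀ n, N (∑ i ∈ Finset.range n, g i f • fv i) ≤ B * N f := by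
  classical
  have hN : IsNormOn S N := hB.1
  set M : Submodule ℝ X := toSub hN with hM
  letI : NormedAddCommGroup M := AddGroupNorm.toNormedAddCommGroup
    { toFun := fun x => N x
      map_zero' := by
        have := hN.2.2.2.2.2.2 0 0 hN.1; simpa using this
      add_le' := fun x y => hN.2.2.2.2.2.1 _ x.2 _ y.2
      neg' := fun x => by
        have := hN.2.2.2.2.2.2 (-1) x x.2; simpa using this
      eq_zero_of_map_eq_zero' := fun x hx => by
        exact Subtype.ext (hN.2.2.2.2.1 _ x.2 hx) }
  have hnorm : ∀ x : M, ‖x‖ = N x := fun x => rfl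
  letI : NormedSpace ℝ M := by
    refine ⟨fun a x => ?_⟩
    have := hN.2.2.2.2.2.2 a x x.2
    rw [hnorm, hnorm]
    show N ((a • x : M) : X) ≤ |a| * N x
    rw [Submodule.coe_smul]
    rw [this]
  letI : CompleteSpace M := by
    apply Metric.complete_of_cauchySeq_tendsto
    intro u hu
    rw [Metric.cauchySeq_iff] at hu
    have hc : ∀ ε > 0, ∃ K, ∀ m ≥ K, ∀ n ≥ K, N ((u m : X) - (u n : X)) < ε := by
      intro ε hε
      obtain ⟨K, hK⟩ := hu ε hε
      exact ⟨K, fun m hm n hn => by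
        have := hK m hm n hn
        rwa [dist_eq_norm, hnorm] at this⟩
    obtain ⟨x, hxS, hx⟩ := hB.2 (fun n => (u n : X)) (fun n => (u n).2) hc
    refine ⟨⟨x, hxS⟩, ?_⟩
    rw [tendsto_iff_dist_tendsto_zero]
    exact hx.congr fun n => by rw [dist_eq_norm, hnorm, Submodule.coe_sub]
  set fvM : ℕ → M := fun i => ⟨fv i, hfv i⟩ with hfvM
  set Pl : ℕ → M →ₗ[ℝ] M := fun n =>
    { toFun := fun f => ∑ i ∈ Finset.range n, g i (f : X) • fvM i
      map_add' := fun x y => by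
        simp [add_smul, Finset.sum_add_distrib]
      map_smul' := fun a x => by
        simp [mul_smul, Finset.smul_sum] } with hPl
  have hPlcoe : ∀ n (f : M), ((Pl n f : M) : X) = ∑ i ∈ Finset.range n, g i (f : X) • fv i := by
    intro n f
    simp [hPl, hfvM]
  set P : ℕ → M →L[ℝ] M := fun n =>
    LinearMap.mkContinuous (Pl n)
      (∑ i ∈ Finset.range n, (hg i).choose * ‖fvM i‖)
      (by
        intro f
        calc ‖Pl n f‖ = ‖∑ i ∈ Finset.range n, g i (f : X) • fvM i‖ := rfl
          _ ≤ ∑ i ∈ Finset.range n, ‖g i (f : X) • fvM i‖ := norm_sum_le _ _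
          _ ≤ ∑ i ∈ Finset.range n, ((hg i).choose * ‖fvM i‖) * ‖f‖ := by
              refine Finset.sum_le_sum fun i _ => ?_
              rw [norm_smul]
              have h1 : ‖g i (f : X)‖ ≤ (hg i).choose * ‖f‖ := by
                rw [Real.norm_eq_abs, hnorm]
                exact (hg i).choose_spec.2 _ f.2
              calc ‖g i (f:X)‖ * ‖fvM i‖ ≤ ((hg i).choose * ‖f‖) * ‖fvM i‖ :=
                    mul_le_mul_of_nonneg_right h1 (norm_nonneg _)
                _ = ((hg i).choose * ‖fvM i‖) * ‖f‖ := by ring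
          _ = (∑ i ∈ Finset.range n, (hg i).choose * ‖fvM i‖) * ‖f‖ := by
              rw [Finset.sum_mul]) with hP
  obtain ⟨B, hBb⟩ := banach_steinhaus (g := P) (fun f => by
    obtain ⟨C, hC⟩ := hpt (f : X) f.2
    refine ⟨C, fun n => ?_⟩
    rw [hnorm]
    show N ((P n f : M) : X) ≤ C
    have : ((P n f : M) : X) = ∑ i ∈ Finset.range n, g i (f : X) • fv i := hPlcoe n f
    rw [this]; exact hC n)
  refine ⟨B, fun f hf n => ?_⟩
  have := (P n).le_opNorm ⟨f, hf⟩
  have h2 : ‖P n ⟨f, hf⟩‖ ≤ B * ‖(⟨f, hf⟩ : M)‖ :=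
    le_trans this (mul_le_mul_of_nonneg_right (hBb n) (norm_nonneg _))
  rw [hnorm, hnorm] at h2
  have h3 : ((P n ⟨f, hf⟩ : M) : X) = ∑ i ∈ Finset.range n, g i f • fv i := hPlcoe n ⟨f, hf⟩
  rwa [h3] at h2

def Psum (fv : ℕ → X) (c : ℕ → ℝ) (n : ℕ) : X := ∑ i ∈ Finset.range n, c i • fv i

theorem Psum_add (fv : ℕ → X) (c d : ℕ → ℝ) (n : ℕ) :
    Psum fv (c + d) n = Psum fv c n + Psum fv d n := by
  simp [Psum, add_smul, Finset.sum_add_distrib]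

theorem Psum_smul (fv : ℕ → X) (a : ℝ) (c : ℕ → ℝ) (n : ℕ) :
    Psum fv (a • c) n = a • Psum fv c n := by
  simp [Psum, mul_smul, Finset.smul_sum]

theorem Psum_sub (fv : ℕ → X) (c d : ℕ → ℝ) (n : ℕ) :
    Psum fv (c - d) n = Psum fv c n - Psum fv d n := by
  simp [Psum, sub_smul, Finset.sum_sub_distrib]

theorem Psum_zero (fv : ℕ → X) (n : ℕ) : Psum fv (0 : ℕ → ℝ) n = 0 := by
  simp [Psum]

theorem Psum_succ_sub (fv : ℕ → X) (c : ℕ → ℝ) (i : ℕ) :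
    c i • fv i = Psum fv c (i + 1) - Psum fv c i := by
  simp [Psum, Finset.sum_range_succ]

theorem Psum_single (fv : ℕ → X) (i n : ℕ) :
    Psum fv (Pi.single i (1 : ℝ)) n = if i < n then fv i else 0 := by
  classical
  simp only [Psum, Pi.single_apply, ite_smul, one_smul, zero_smul]
  rw [Finset.sum_ite_eq' (Finset.range n) i (fun j => fv j)]
  simp [Finset.mem_range]

theorem range_inter_range (m n : ℕ) :
    Finset.range m ∩ Finset.range n = Finset.range (min m n) := by
  ext x; simp [Nat.lt_min]

theorem Psum_trunc (fv : ℕ → X) (c : ℕ → ℝ) (nn m : ℕ) :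
    Psum fv (c - fun j => if j < nn then c j else 0) m = Psum fv c m - Psum fv c (min nn m) := by
  classical
  have h1 : Psum fv (c - fun j => if j < nn then c j else 0) m
      = Psum fv c m - ∑ j ∈ Finset.range m, (if j < nn then c j else 0) • fv j := by
    simp [Psum, sub_smul, Finset.sum_sub_distrib]
  rw [h1]
  congr 1
  have h2 : ∀ j, (if j < nn then c j else 0) • fv j
      = if j ∈ Finset.range nn then c j • fv j else 0 := by
    intro j; simp [Finset.mem_range, ite_smul]
  simp only [h2]
  rw [Finset.sum_ite_mem, range_inter_range, Nat.min_comm]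
  rfl

end ProofAux

open ProofAux

/-- given a Banach scale `{X_s}` with dense nonzero intersection `X_F`,
functionals `(g i) ⊂ X₀*` and nonzero vectors `(fv i) ⊂ X_F` with
`f = ∑ g i f • fv i` in `X_s` for every `f ∈ X_s` and every `s`, the sequence spaces
`Θ_s := {c : ∑ c i • fv i converges in X_s}` with norm `sup_n ‖∑_{i<n} c i • fv i‖_s`
form a decreasing scale of CB-spaces with increasing norms, `(g i)|_{X_s}` is a Banach
frame for `X_s` w.r.t. `Θ_s` for every `s`, and `(g i)|_{X_F}` is an F-frame for `X_F`
with respect to `Θ_F = ⋂ Θ_s`. -/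
theorem construction_from_expansions
    {X : Type*} [AddCommGroup X] [Module ℝ X]
    (S : ℕ → Set X) (N : ℕ → X → ℝ) (hX : IsScale S N)
    (hne : ∃ f ∈ ⋂ s, S s, f ≠ (0 : X))
    (g : ℕ → X →ₗ[ℝ] ℝ)
    (hgc : ∀ i, ∃ C : ℝ, ∀ f ∈ S 0, |g i f| ≤ C * N 0 f)
    (fv : ℕ → X) (hfv : ∀ i, fv i ∈ ⋂ s, S s) (hfvne : ∀ i, fv i ≠ 0)
    (hexp : ∀ s, ∀ f ∈ S s,
      Tendsto (fun n => N s (f - ∑ i ∈ Finset.range n, g i f • fv i)) atTop (nhds 0))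
    (T : ℕ → Set (ℕ → ℝ))
    (hT : ∀ s, T s = {c | ∃ h ∈ S s,
      Tendsto (fun n => N s (h - ∑ i ∈ Finset.range n, c i • fv i)) atTop (nhds 0)})
    (NT : ℕ → (ℕ → ℝ) → ℝ)
    (hNT : ∀ s c, NT s c = ⨆ n : ℕ, N s (∑ i ∈ Finset.range n, c i • fv i)) :
    (∀ s, IsBKOn (T s) (NT s)) ∧
    (∀ s, (∀ i, Pi.single i (1 : ℝ) ∈ T s) ∧
      ∀ c ∈ T s, Tendsto (fun n => NT s (c - fun j => if j < n then c j else 0))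
        atTop (nhds 0)) ∧
    (∀ s, T (s + 1) ⊆ T s) ∧
    (∀ s, ∀ c ∈ T (s + 1), NT s c ≤ NT (s + 1) c) ∧
    (∀ s, ∃ A > 0, ∃ B : ℝ, A ≤ B ∧
      (∀ f ∈ S s, (fun i => g i f) ∈ T s ∧
        A * N s f ≤ NT s (fun i => g i f) ∧ NT s (fun i => g i f) ≤ B * N s f) ∧
      ∃ V : (ℕ → ℝ) →ₗ[ℝ] X, (∀ c ∈ T s, V c ∈ S s) ∧
        (∃ K : ℝ, ∀ c ∈ T s, N s (V c) ≤ K * NT s c) ∧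
        (∀ f ∈ S s, V (fun i => g i f) = f)) ∧
    (∃ V : (ℕ → ℝ) →ₗ[ℝ] X,
      (∀ c ∈ ⋂ s, T s, V c ∈ ⋂ s, S s) ∧
      (∀ s, ∃ K : ℝ, ∀ c ∈ ⋂ t, T t, N s (V c) ≤ K * NT s c) ∧
      (∀ f ∈ ⋂ s, S s, V (fun i => g i f) = f)) := by
  classical
  obtain ⟨hBan, hdec, hmono, _hdense⟩ := hX
  have hN : ∀ s, IsNormOn (S s) (N s) := fun s => (hBan s).1
  have hfvS : ∀ s i, fv i ∈ S s := fun s i => Set.mem_iInter.1 (hfv i) s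
  have hPmem : ∀ s c n, Psum fv c n ∈ S s := fun s c n =>
    sum_mem' (hN s) _ _ (fun i _ => (hN s).2.2.1 _ _ (hfvS s i))
  have hTmem : ∀ s (c : ℕ → ℝ), c ∈ T s ↔ ∃ h ∈ S s,
      Tendsto (fun n => N s (h - Psum fv c n)) atTop (𝓝 0) := by
    intro s c; rw [hT s]; exact Iff.rfl
  have hNT' : ∀ s c, NT s c = ⨆ n, N s (Psum fv c n) := hNT
  have hexp' : ∀ s, ∀ f ∈ S s,
      Tendsto (fun n => N s (f - Psum fv (fun i => g i f) n)) atTop (𝓝 0) := hexp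
  -- uniqueness of limits
  have huniq : ∀ s (c : ℕ → ℝ) (h h' : X), h ∈ S s → h' ∈ S s →
      Tendsto (fun n => N s (h - Psum fv c n)) atTop (𝓝 0) →
      Tendsto (fun n => N s (h' - Psum fv c n)) atTop (𝓝 0) → h = h' := by
    intro s c h h' hh hh' t1 t2
    have hsum : Tendsto (fun n => N s (h - Psum fv c n) + N s (h' - Psum fv c n))
        atTop (𝓝 0) := by simpa using t1.add t2
    have hb : ∀ n, N s (h - h') ≤ N s (h - Psum fv c n) + N s (h' - Psum fv c n) := by
      intro n
      have := norm_triangle3 (hN s) hh (hPmem s c n) hh'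
      rwa [norm_sub_comm' (hN s) (hPmem s c n) hh'] at this
    have hle0 : N s (h - h') ≤ 0 := ge_of_tendsto' hsum hb
    have hge0 : 0 ≤ N s (h - h') := (hN s).2.2.2.1 _ (sub_mem (hN s) hh hh')
    have : N s (h - h') = 0 := le_antisymm hle0 hge0
    have := (hN s).2.2.2.2.1 _ (sub_mem (hN s) hh hh') this
    exact sub_eq_zero.1 this
  -- bounded partial sums and sup bounds
  have hbdd : ∀ s c, c ∈ T s → BddAbove (Set.range fun n => N s (Psum fv c n)) := by
    intro s c hc
    obtain ⟨h, hhS, htd⟩ := (hTmem s c).1 hc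
    obtain ⟨b, hb⟩ := htd.bddAbove_range
    refine ⟨b + N s h, ?_⟩
    rintro x ⟨n, rfl⟩
    have h1 : N s (Psum fv c n) ≤ N s (Psum fv c n - h) + N s h := by
      have := (hN s).2.2.2.2.2.1 (Psum fv c n - h) (sub_mem (hN s) (hPmem s c n) hhS) h hhS
      simpa using this
    have h2 : N s (Psum fv c n - h) = N s (h - Psum fv c n) :=
      norm_sub_comm' (hN s) (hPmem s c n) hhS
    have h3 : N s (h - Psum fv c n) ≤ b := hb (Set.mem_range_self n)
    linarith
  have hle : ∀ s c, c ∈ T s → ∀ n, N s (Psum fv c n) ≤ NT s c := by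
    intro s c hc n
    rw [hNT']
    exact le_ciSup (hbdd s c hc) n
  have hNTnn : ∀ s c, 0 ≤ NT s c := by
    intro s c
    rw [hNT']
    exact Real.iSup_nonneg fun n => (hN s).2.2.2.1 _ (hPmem s c n)
  have hlim_le : ∀ s c, c ∈ T s → ∀ h, h ∈ S s →
      Tendsto (fun n => N s (h - Psum fv c n)) atTop (𝓝 0) → N s h ≤ NT s c := by
    intro s c hc h hhS htd
    have hsum : Tendsto (fun n => N s (h - Psum fv c n) + NT s c) atTop (𝓝 (NT s c)) := by
      simpa using htd.add (tendsto_const_nhds (x := NT s c))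
    refine ge_of_tendsto' hsum fun n => ?_
    have h1 : N s h ≤ N s (h - Psum fv c n) + N s (Psum fv c n) := by
      have := (hN s).2.2.2.2.2.1 (h - Psum fv c n) (sub_mem (hN s) hhS (hPmem s c n))
        (Psum fv c n) (hPmem s c n)
      simpa using this
    linarith [hle s c hc n]
  -- Cauchy property of partial sums
  have hCauchyP : ∀ s c, c ∈ T s → ∀ ε > 0, ∃ J, ∀ m ≥ J, ∀ n ≥ J,
      N s (Psum fv c m - Psum fv c n) < ε := by
    intro s c hc ε hε
    obtain ⟨h, hhS, htd⟩ := (hTmem s c).1 hc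
    rw [Metric.tendsto_atTop] at htd
    obtain ⟨J, hJ⟩ := htd (ε / 2) (by linarith)
    refine ⟨J, fun m hm n hn => ?_⟩
    have h1 : N s (h - Psum fv c m) < ε / 2 := by
      have := hJ m hm
      rw [Real.dist_eq, sub_zero] at this
      exact lt_of_le_of_lt (le_abs_self _) this
    have h2 : N s (h - Psum fv c n) < ε / 2 := by
      have := hJ n hn
      rw [Real.dist_eq, sub_zero] at this
      exact lt_of_le_of_lt (le_abs_self _) this
    have h3 : N s (Psum fv c m - Psum fv c n) ≤
        N s (Psum fv c m - h) + N s (h - Psum fv c n) :=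
      norm_triangle3 (hN s) (hPmem s c m) hhS (hPmem s c n)
    rw [norm_sub_comm' (hN s) (hPmem s c m) hhS] at h3
    linarith
  -- limits combine
  have hadd_lim : ∀ s (c d : ℕ → ℝ) (h h' : X), h ∈ S s → h' ∈ S s →
      Tendsto (fun n => N s (h - Psum fv c n)) atTop (𝓝 0) →
      Tendsto (fun n => N s (h' - Psum fv d n)) atTop (𝓝 0) →
      Tendsto (fun n => N s (h + h' - Psum fv (c + d) n)) atTop (𝓝 0) := by
    intro s c d h h' hh hh' t1 t2
    refine squeeze_zero (fun n => (hN s).2.2.2.1 _ ?_) (fun n => ?_) (by simpa using t1.add t2)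
    · exact sub_mem (hN s) ((hN s).2.1 _ hh _ hh') (hPmem s _ n)
    · rw [Psum_add]
      have heq : h + h' - (Psum fv c n + Psum fv d n)
          = (h - Psum fv c n) + (h' - Psum fv d n) := by abel
      rw [heq]
      exact (hN s).2.2.2.2.2.1 _ (sub_mem (hN s) hh (hPmem s c n)) _
        (sub_mem (hN s) hh' (hPmem s d n))
  have hsmul_lim : ∀ s (a : ℝ) (c : ℕ → ℝ) (h : X), h ∈ S s →
      Tendsto (fun n => N s (h - Psum fv c n)) atTop (𝓝 0) →
      Tendsto (fun n => N s (a • h - Psum fv (a • c) n)) atTop (𝓝 0) := by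
    intro s a c h hh t1
    have heq : ∀ n, N s (a • h - Psum fv (a • c) n) = |a| * N s (h - Psum fv c n) := by
      intro n
      rw [Psum_smul, ← smul_sub]
      exact (hN s).2.2.2.2.2.2 a _ (sub_mem (hN s) hh (hPmem s c n))
    rw [show (fun n => N s (a • h - Psum fv (a • c) n))
        = fun n => |a| * N s (h - Psum fv c n) from funext heq]
    simpa using t1.const_mul |a|
  -- membership closure
  have hT0 : ∀ s, (0 : ℕ → ℝ) ∈ T s := by
    intro s
    rw [hTmem]
    refine ⟨0, (hN s).1, ?_⟩
    have : ∀ n, N s ((0 : X) - Psum fv (0 : ℕ → ℝ) n) = 0 := by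
      intro n; rw [Psum_zero]; simpa using norm_zero' (hN s)
    rw [show (fun n => N s ((0:X) - Psum fv (0 : ℕ → ℝ) n)) = fun _ => (0:ℝ) from funext this]
    exact tendsto_const_nhds
  have hTadd : ∀ s (c d : ℕ → ℝ), c ∈ T s → d ∈ T s → c + d ∈ T s := by
    intro s c d hc hd
    obtain ⟨h, hh, t1⟩ := (hTmem s c).1 hc
    obtain ⟨h', hh', t2⟩ := (hTmem s d).1 hd
    exact (hTmem s _).2 ⟨h + h', (hN s).2.1 _ hh _ hh', hadd_lim s c d h h' hh hh' t1 t2⟩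
  have hTsmul : ∀ s (a : ℝ) (c : ℕ → ℝ), c ∈ T s → a • c ∈ T s := by
    intro s a c hc
    obtain ⟨h, hh, t1⟩ := (hTmem s c).1 hc
    exact (hTmem s _).2 ⟨a • h, (hN s).2.2.1 _ _ hh, hsmul_lim s a c h hh t1⟩
  have hTsubmem : ∀ s (c d : ℕ → ℝ), c ∈ T s → d ∈ T s → c - d ∈ T s := by
    intro s c d hc hd
    have : c - d = c + (-1 : ℝ) • d := by
      funext j; simp [sub_eq_add_neg]
    rw [this]
    exact hTadd s _ _ hc (hTsmul s (-1) d hd)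
  -- positivity of N s (fv i)
  have hfvpos : ∀ s i, 0 < N s (fv i) := by
    intro s i
    rcases lt_or_eq_of_le ((hN s).2.2.2.1 _ (hfvS s i)) with h | h
    · exact h
    · exact absurd ((hN s).2.2.2.2.1 _ (hfvS s i) h.symm) (hfvne i)
  -- coordinate bound
  have hcoord : ∀ s i (c : ℕ → ℝ), c ∈ T s → |c i| * N s (fv i) ≤ 2 * NT s c := by
    intro s i c hc
    have h1 : N s (c i • fv i) ≤ N s (Psum fv c (i+1)) + N s (Psum fv c i) := by
      rw [Psum_succ_sub fv c i]
      exact norm_sub_le' (hN s) (hPmem s c (i+1)) (hPmem s c i)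
    have h2 : N s (c i • fv i) = |c i| * N s (fv i) :=
      (hN s).2.2.2.2.2.2 _ _ (hfvS s i)
    have h3 := hle s c hc (i+1)
    have h4 := hle s c hc i
    linarith
  -- monotonicity to level 0
  have hS0 : ∀ s, S s ⊆ S 0 := by
    intro s
    induction s with
    | zero => exact subset_rfl
    | succ t ih => exact (hdec t).trans ih
  have hN0 : ∀ s, ∀ f ∈ S s, N 0 f ≤ N s f := by
    intro s
    induction s with
    | zero => exact fun f _ => le_rfl
    | succ t ih => exact fun f hf => le_trans (ih f (hdec t hf)) (hmono t f hf)
  have hgs : ∀ s i, ∃ C, 0 ≤ C ∧ ∀ f ∈ S s, |g i f| ≤ C * N s f := by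
    intro s i
    obtain ⟨C, hC⟩ := hgc i
    refine ⟨max C 0, le_max_right _ _, fun f hf => ?_⟩
    have h0 : f ∈ S 0 := hS0 s hf
    have h1 : |g i f| ≤ C * N 0 f := hC f h0
    have h2 : 0 ≤ N 0 f := (hN 0).2.2.2.1 _ h0
    have h3 : N 0 f ≤ N s f := hN0 s f hf
    nlinarith [le_max_left C (0:ℝ), le_max_right C (0:ℝ)]
  -- coefficients of f lie in T s
  have hgfT : ∀ s, ∀ f ∈ S s, (fun i => g i f) ∈ T s := by
    intro s f hf
    exact (hTmem s _).2 ⟨f, hf, hexp' s f hf⟩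
  -- uniform bound from Banach-Steinhaus
  have hB : ∀ s, ∃ B, ∀ f ∈ S s, ∀ n, N s (Psum fv (fun i => g i f) n) ≤ B * N s f := by
    intro s
    exact ubp (hBan s) g (hgs s) fv (hfvS s)
      (fun f hf => ⟨NT s (fun i => g i f), fun n => hle s _ (hgfT s f hf) n⟩)
  -- reconstruction operator for each s
  have hV : ∀ s, ∃ V : (ℕ → ℝ) →ₗ[ℝ] X, ∀ c ∈ T s, V c ∈ S s ∧
      Tendsto (fun n => N s (V c - Psum fv c n)) atTop (𝓝 0) := by
    intro s
    let Tsub : Submodule ℝ (ℕ → ℝ) :=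
      { carrier := T s
        add_mem' := fun hc hd => hTadd s _ _ hc hd
        zero_mem' := hT0 s
        smul_mem' := fun a c hc => hTsmul s a c hc }
    have hex : ∀ c : Tsub, ∃ h, h ∈ S s ∧
        Tendsto (fun n => N s (h - Psum fv (c : ℕ → ℝ) n)) atTop (𝓝 0) := by
      intro c
      obtain ⟨h, hh, ht⟩ := (hTmem s (c : ℕ → ℝ)).1 c.2
      exact ⟨h, hh, ht⟩
    choose limf hlimS hlimT using hex
    let L : Tsub →ₗ[ℝ] X :=
      { toFun := limf
        map_add' := fun x y => by
          refine huniq s ((x : ℕ → ℝ) + (y : ℕ → ℝ)) _ _ ?_ ?_ ?_ ?_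
          · exact hlimS (x + y)
          · exact (hN s).2.1 _ (hlimS x) _ (hlimS y)
          · have := hlimT (x + y)
            simpa using this
          · exact hadd_lim s _ _ _ _ (hlimS x) (hlimS y) (hlimT x) (hlimT y)
        map_smul' := fun a x => by
          refine huniq s (a • (x : ℕ → ℝ)) _ _ ?_ ?_ ?_ ?_
          · exact hlimS (a • x)
          · exact (hN s).2.2.1 _ _ (hlimS x)
          · have := hlimT (a • x)
            simpa using this
          · exact hsmul_lim s a _ _ (hlimS x) (hlimT x) }
    obtain ⟨q, hq⟩ := Submodule.exists_isCompl Tsub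
    refine ⟨L ∘ₗ Submodule.linearProjOfIsCompl Tsub q hq, ?_⟩
    intro c hc
    have hproj : Submodule.linearProjOfIsCompl Tsub q hq c = ⟨c, hc⟩ := by
      exact Submodule.linearProjOfIsCompl_apply_left hq ⟨c, hc⟩
    have hVc : (L ∘ₗ Submodule.linearProjOfIsCompl Tsub q hq) c = limf ⟨c, hc⟩ := by
      simp [LinearMap.comp_apply, hproj, L]
    rw [hVc]
    exact ⟨hlimS ⟨c, hc⟩, hlimT ⟨c, hc⟩⟩
  -- completeness of (T s, NT s)
  have hcomplete : ∀ s (u : ℕ → ℕ → ℝ), (∀ k, u k ∈ T s) →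
      (∀ ε > 0, ∃ M, ∀ m ≥ M, ∀ n ≥ M, NT s (u m - u n) < ε) →
      ∃ x ∈ T s, Tendsto (fun k => NT s (u k - x)) atTop (𝓝 0) := by
    intro s u hu hcau
    -- coordinatewise limits
    have hcs : ∀ i, CauchySeq (fun k => u k i) := by
      intro i
      rw [Metric.cauchySeq_iff]
      intro ε hε
      have hεf : 0 < ε * N s (fv i) / 2 := by
        have := hfvpos s i; positivity
      obtain ⟨M, hM⟩ := hcau (ε * N s (fv i) / 2) hεf
      refine ⟨M, fun m hm n hn => ?_⟩
      have h1 : |(u m - u n) i| * N s (fv i) ≤ 2 * NT s (u m - u n) :=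
        hcoord s i _ (hTsubmem s _ _ (hu m) (hu n))
      have h2 : NT s (u m - u n) < ε * N s (fv i) / 2 := hM m hm n hn
      have h3 : |(u m - u n) i| * N s (fv i) < ε * N s (fv i) := by linarith
      have h4 : |(u m - u n) i| < ε := by
        have := hfvpos s i
        exact lt_of_mul_lt_mul_right (by linarith) (le_of_lt this)
      rw [Real.dist_eq]
      simpa using h4
    have hex : ∀ i, ∃ l : ℝ, Tendsto (fun k => u k i) atTop (𝓝 l) :=
      fun i => cauchySeq_tendsto_of_complete (hcs i)
    choose cinf hcinf using hex
    -- uniform control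
    have key : ∀ ε > 0, ∃ K, ∀ k ≥ K, ∀ n,
        N s (Psum fv (u k) n - Psum fv cinf n) ≤ ε := by
      intro ε hε
      obtain ⟨K, hK⟩ := hcau (ε / 2) (by linarith)
      refine ⟨K, fun k hk n => ?_⟩
      have hconv : Tendsto (fun l => N s (Psum fv (u l) n - Psum fv cinf n)) atTop (𝓝 0) := by
        have hb : ∀ l, N s (Psum fv (u l) n - Psum fv cinf n)
            ≤ ∑ i ∈ Finset.range n, |u l i - cinf i| * N s (fv i) := by
          intro l
          have heq : Psum fv (u l) n - Psum fv cinf n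
              = ∑ i ∈ Finset.range n, (u l i - cinf i) • fv i := by
            simp [Psum, sub_smul, Finset.sum_sub_distrib]
          rw [heq]
          refine le_trans (norm_sum_le' (hN s) _ _
            (fun i _ => (hN s).2.2.1 _ _ (hfvS s i))) ?_
          refine Finset.sum_le_sum fun i _ => le_of_eq ?_
          exact (hN s).2.2.2.2.2.2 _ _ (hfvS s i)
        refine squeeze_zero (fun l => (hN s).2.2.2.1 _
          (sub_mem (hN s) (hPmem s _ n) (hPmem s _ n))) hb ?_
        have : Tendsto (fun l => ∑ i ∈ Finset.range n, |u l i - cinf i| * N s (fv i))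
            atTop (𝓝 (∑ i ∈ Finset.range n, (0:ℝ))) := by
          refine tendsto_finset_sum _ fun i _ => ?_
          have h1 : Tendsto (fun l => u l i - cinf i) atTop (𝓝 0) := by
            simpa using (hcinf i).sub (tendsto_const_nhds (x := cinf i))
          have h2 : Tendsto (fun l => |u l i - cinf i|) atTop (𝓝 0) := by
            simpa using h1.abs
          simpa using h2.mul_const (N s (fv i))
        simpa using this
      -- pass to the limit in l
      have htends : Tendsto (fun l => ε / 2 + N s (Psum fv (u l) n - Psum fv cinf n))
          atTop (𝓝 (ε / 2)) := by
        simpa using (tendsto_const_nhds (x := ε / 2)).add hconv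
      have hev : ∀ᶠ l in atTop, N s (Psum fv (u k) n - Psum fv cinf n)
          ≤ ε / 2 + N s (Psum fv (u l) n - Psum fv cinf n) := by
        filter_upwards [eventually_ge_atTop K] with l hl
        have h1 : N s (Psum fv (u k) n - Psum fv (u l) n) ≤ NT s (u k - u l) := by
          have := hle s (u k - u l) (hTsubmem s _ _ (hu k) (hu l)) n
          rwa [Psum_sub] at this
        have h2 : NT s (u k - u l) < ε / 2 := hK k hk l hl
        have h3 : N s (Psum fv (u k) n - Psum fv cinf n)
            ≤ N s (Psum fv (u k) n - Psum fv (u l) n)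
              + N s (Psum fv (u l) n - Psum fv cinf n) :=
          norm_triangle3 (hN s) (hPmem s _ n) (hPmem s _ n) (hPmem s _ n)
        linarith
      have := ge_of_tendsto htends hev
      linarith
    -- partial sums of cinf are Cauchy in X_s
    have hPCcau : ∀ ε > 0, ∃ J, ∀ m ≥ J, ∀ n ≥ J,
        N s (Psum fv cinf m - Psum fv cinf n) < ε := by
      intro ε hε
      obtain ⟨K, hK⟩ := key (ε / 4) (by linarith)
      obtain ⟨J, hJ⟩ := hCauchyP s (u K) (hu K) (ε / 4) (by linarith)
      refine ⟨J, fun m hm n hn => ?_⟩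
      have h1 : N s (Psum fv cinf m - Psum fv (u K) m) ≤ ε / 4 := by
        have := hK K le_rfl m
        rwa [norm_sub_comm' (hN s) (hPmem s _ m) (hPmem s _ m)] at this
      have h2 : N s (Psum fv (u K) m - Psum fv (u K) n) < ε / 4 := hJ m hm n hn
      have h3 : N s (Psum fv (u K) n - Psum fv cinf n) ≤ ε / 4 := hK K le_rfl n
      have t1 : N s (Psum fv cinf m - Psum fv cinf n)
          ≤ N s (Psum fv cinf m - Psum fv (u K) m)
            + N s (Psum fv (u K) m - Psum fv cinf n) :=
        norm_triangle3 (hN s) (hPmem s _ m) (hPmem s _ m) (hPmem s _ n)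
      have t2 : N s (Psum fv (u K) m - Psum fv cinf n)
          ≤ N s (Psum fv (u K) m - Psum fv (u K) n)
            + N s (Psum fv (u K) n - Psum fv cinf n) :=
        norm_triangle3 (hN s) (hPmem s _ m) (hPmem s _ n) (hPmem s _ n)
      linarith
    obtain ⟨hinf, hinfS, hinft⟩ := (hBan s).2 (fun n => Psum fv cinf n)
      (fun n => hPmem s cinf n) hPCcau
    have hcinfT : cinf ∈ T s := by
      refine (hTmem s cinf).2 ⟨hinf, hinfS, ?_⟩
      refine hinft.congr fun n => ?_
      exact norm_sub_comm' (hN s) (hPmem s cinf n) hinfS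
    refine ⟨cinf, hcinfT, ?_⟩
    rw [Metric.tendsto_atTop]
    intro ε hε
    obtain ⟨K, hK⟩ := key (ε / 2) (by linarith)
    refine ⟨K, fun k hk => ?_⟩
    rw [Real.dist_eq, sub_zero, abs_of_nonneg (hNTnn s _)]
    have hsup : NT s (u k - cinf) ≤ ε / 2 := by
      rw [hNT']
      refine ciSup_le fun n => ?_
      rw [Psum_sub]
      exact hK k hk n
    linarith
  -- homogeneity of NT
  have hNThom : ∀ s (a : ℝ) (c : ℕ → ℝ), NT s (a • c) = |a| * NT s c := by
    intro s a c
    rw [hNT', hNT', Real.mul_iSup_of_nonneg (abs_nonneg a)]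
    congr 1
    funext n
    rw [Psum_smul]
    exact (hN s).2.2.2.2.2.2 a _ (hPmem s c n)
  -- MAIN ASSEMBLY
  refine ⟨?_, ?_, ?_, ?_, ?_, ?_⟩
  · -- Part 1 : IsBKOn
    intro s
    refine ⟨⟨⟨hT0 s, fun c hc d hd => hTadd s c d hc hd, fun a c hc => hTsmul s a c hc,
      fun c _ => hNTnn s c, ?_, ?_, fun a c _ => hNThom s a c⟩, hcomplete s⟩, ?_⟩
    · -- definiteness
      intro c hc hzero
      have hP0 : ∀ n, Psum fv c n = 0 := by
        intro n
        refine (hN s).2.2.2.2.1 _ (hPmem s c n) ?_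
        have h1 := hle s c hc n
        have h2 := (hN s).2.2.2.1 _ (hPmem s c n)
        linarith [hzero ▸ h1]
      funext i
      by_contra hci
      have h1 : c i • fv i = 0 := by
        rw [Psum_succ_sub fv c i, hP0, hP0, sub_zero]
      have : fv i = 0 := by
        have := congrArg (fun x => (c i)⁻¹ • x) h1
        simpa [smul_smul, inv_mul_cancel₀ hci] using this
      exact hfvne i this
    · -- triangle
      intro c hc d hd
      rw [hNT' s (c + d)]
      refine ciSup_le fun n => ?_
      rw [Psum_add]
      refine le_trans ((hN s).2.2.2.2.2.1 _ (hPmem s c n) _ (hPmem s d n)) ?_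
      exact add_le_add (hle s c hc n) (hle s d hd n)
    · -- BK property
      intro i
      refine ⟨2 / N s (fv i), fun c hc => ?_⟩
      have h1 := hcoord s i c hc
      have h2 := hfvpos s i
      rw [div_mul_eq_mul_div, le_div_iff₀ h2]
      linarith
  · -- Part 2 : canonical vectors form a basis
    intro s
    constructor
    · intro i
      refine (hTmem s _).2 ⟨fv i, hfvS s i, ?_⟩
      rw [Metric.tendsto_atTop]
      intro ε hε
      refine ⟨i + 1, fun n hn => ?_⟩
      have : Psum fv (Pi.single i (1:ℝ)) n = fv i := by
        rw [Psum_single]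
        simp [Nat.lt_of_lt_of_le (Nat.lt_succ_self i) hn]
      rw [this, sub_self, norm_zero' (hN s), Real.dist_eq, sub_zero, abs_zero]
      exact hε
    · intro c hc
      rw [Metric.tendsto_atTop]
      intro ε hε
      obtain ⟨J, hJ⟩ := hCauchyP s c hc (ε / 2) (by linarith)
      refine ⟨J, fun nn hnn => ?_⟩
      rw [Real.dist_eq, sub_zero, abs_of_nonneg (hNTnn s _)]
      have hsup : NT s (c - fun j => if j < nn then c j else 0) ≤ ε / 2 := by
        rw [hNT']
        refine ciSup_le fun m => ?_
        rw [Psum_trunc]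
        rcases le_or_gt m nn with hm | hm
        · rw [min_eq_right hm, sub_self, norm_zero' (hN s)]
          linarith
        · rw [min_eq_left (le_of_lt hm)]
          exact le_of_lt (hJ m (le_trans hnn (le_of_lt hm)) nn hnn)
      linarith
  · -- Part 3 : inclusion
    intro s c hc
    obtain ⟨h, hh, ht⟩ := (hTmem (s+1) c).1 hc
    refine (hTmem s c).2 ⟨h, hdec s hh, ?_⟩
    refine squeeze_zero (fun n => (hN s).2.2.2.1 _
      (sub_mem (hN s) (hdec s hh) (hPmem s c n))) (fun n => ?_) ht
    exact hmono s _ (sub_mem (hN (s+1)) hh (hPmem (s+1) c n))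
  · -- Part 4 : monotone norms
    intro s c hc
    rw [hNT' s c]
    refine ciSup_le fun n => ?_
    exact le_trans (hmono s _ (hPmem (s+1) c n)) (hle (s+1) c hc n)
  · -- Part 5 : Banach frame
    intro s
    obtain ⟨B, hBs⟩ := hB s
    refine ⟨1, one_pos, max B 1, le_max_right _ _, fun f hf => ?_, ?_⟩
    · refine ⟨hgfT s f hf, ?_, ?_⟩
      · rw [one_mul]
        exact hlim_le s _ (hgfT s f hf) f hf (hexp' s f hf)
      · rw [hNT']
        refine ciSup_le fun n => ?_
        refine le_trans (hBs f hf n) ?_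
        exact mul_le_mul_of_nonneg_right (le_max_left _ _) ((hN s).2.2.2.1 f hf)
    · obtain ⟨V, hVp⟩ := hV s
      refine ⟨V, fun c hc => (hVp c hc).1, ⟨1, fun c hc => ?_⟩, fun f hf => ?_⟩
      · rw [one_mul]
        exact hlim_le s c hc (V c) (hVp c hc).1 (hVp c hc).2
      · exact huniq s (fun i => g i f) (V fun i => g i f) f
          (hVp _ (hgfT s f hf)).1 hf (hVp _ (hgfT s f hf)).2 (hexp' s f hf)
  · -- Part 6 : F-frame
    obtain ⟨V, hVp⟩ := hV 0
    have hVs : ∀ s, ∀ c ∈ ⋂ t, T t, V c ∈ S s ∧ N s (V c) ≤ NT s c := by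
      intro s c hc
      have hcs : c ∈ T s := Set.mem_iInter.1 hc s
      have hc0 : c ∈ T 0 := Set.mem_iInter.1 hc 0
      obtain ⟨hs, hhs, hts⟩ := (hTmem s c).1 hcs
      have heq : V c = hs := by
        refine huniq 0 c (V c) hs (hVp c hc0).1 (hS0 s hhs) (hVp c hc0).2 ?_
        refine squeeze_zero (fun n => (hN 0).2.2.2.1 _
          (hS0 s (sub_mem (hN s) hhs (hPmem s c n)))) (fun n => ?_) hts
        exact hN0 s _ (sub_mem (hN s) hhs (hPmem s c n))
      rw [heq]
      exact ⟨hhs, hlim_le s c hcs hs hhs hts⟩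
    refine ⟨V, fun c hc => Set.mem_iInter.2 fun s => (hVs s c hc).1,
      fun s => ⟨1, fun c hc => by rw [one_mul]; exact (hVs s c hc).2⟩, fun f hf => ?_⟩
    have hf0 : f ∈ S 0 := Set.mem_iInter.1 hf 0
    exact huniq 0 (fun i => g i f) (V fun i => g i f) f
      (hVp _ (hgfT 0 f hf0)).1 hf0 (hVp _ (hgfT 0 f hf0)).2 (hexp' 0 f hf0)
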